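/- For integers 1 ≤ w ≤ a and any sequence of reals x_0, ..., x_{a-w} with x_0 = 1 and x_{r+1} ≤ x_r + (1 + ln(a/w))/(a−r), the final value satisfies x_{a-w} ≤ (1 + ln(a/w))^2. -/

import Mathlib

open Real

theorem anchorhash_memory_accesses_final (w a : ℕ) (hw : 1 ≤ w) (hwa : w ≤ a)
    (x : ℕ → ℝ) (hx0 : x 0 = 1)
    (hrec : ∀ r, r < a - w →
      x (r + 1) ≤ x r + (1 + Real.log ((a : ℝ) / (w : ℝ))) / ((a : ℝ) - r)) :
    x (a - w) ≤ (1 + Real.log ((a : ℝ) / (w : ℝ))) ^ 2 := by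
  set L := 1 + Real.log ((a : ℝ) / (w : ℝ)) with hL
  clear_value L
  have hwpos : (0 : ℝ) < w := by exact_mod_cast hw
  have haw : (1 : ℝ) ≤ (a : ℝ) / w := by
    rw [le_div_iff₀ hwpos]; simp; exact_mod_cast hwa
  have hlog0 : 0 ≤ Real.log ((a : ℝ) / w) := Real.log_nonneg haw
  have hL1 : (1 : ℝ) ≤ L := by simp [hL]; linarith
  -- main induction
  have key : ∀ n, n ≤ a - w →
      x n ≤ 1 + L * (Real.log a - Real.log ((a : ℝ) - n)) := by
    intro n hn
    induction n with
    | zero => simp [hx0]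
    | succ k ih =>
      have hk : k < a - w := Nat.lt_of_succ_le hn
      have ih' := ih (le_of_lt hk)
      -- a - (k+1) ≥ w ≥ 1
      have hk1 : k + 1 ≤ a - w := hn
      have hka : k + w + 1 ≤ a := by omega
      have hreal : (w : ℝ) ≤ (a : ℝ) - (k + 1) := by
        have : (w : ℝ) + (k + 1) ≤ a := by
          push_cast; have : (w + (k + 1) : ℕ) ≤ a := by omega
          exact_mod_cast this
        linarith
      have h1 : (1 : ℝ) ≤ (a : ℝ) - (k + 1) := le_trans (by exact_mod_cast hw) hreal
      have hpos1 : (0 : ℝ) < (a : ℝ) - (k + 1) := lt_of_lt_of_le zero_lt_one h1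
      have hpos2 : (0 : ℝ) < (a : ℝ) - k := by linarith
      -- log bound: 1/(a-k) ≤ log(a-k) - log(a-k-1)
      have hlb : 1 / ((a : ℝ) - k) ≤ Real.log ((a : ℝ) - k) - Real.log ((a : ℝ) - (k + 1)) := by
        have hy : (0 : ℝ) < ((a : ℝ) - (k + 1)) / ((a : ℝ) - k) := div_pos hpos1 hpos2
        have := Real.log_le_sub_one_of_pos hy
        rw [Real.log_div (ne_of_gt hpos1) (ne_of_gt hpos2)] at this
        have hd : ((a : ℝ) - (k + 1)) / ((a : ℝ) - k) - 1 = -(1 / ((a : ℝ) - k)) := by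
          field_simp
          ring
        rw [hd] at this
        linarith
      have hrecn := hrec k hk
      have hLpos : (0 : ℝ) < L := lt_of_lt_of_le zero_lt_one hL1
      have hstep : L / ((a : ℝ) - k) ≤ L * (Real.log ((a : ℝ) - k) - Real.log ((a : ℝ) - (k + 1))) := by
        rw [div_eq_mul_one_div]
        exact mul_le_mul_of_nonneg_left hlb (le_of_lt hLpos)
      have : x (k + 1) ≤ 1 + L * (Real.log a - Real.log ((a : ℝ) - k)) + L * (Real.log ((a : ℝ) - k) - Real.log ((a : ℝ) - (k + 1))) := by
        calc x (k + 1) ≤ x k + L / ((a : ℝ) - k) := hrecn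
          _ ≤ _ := by linarith
      push_cast at this ⊢
      linarith [this]
  have hfin := key (a - w) le_rfl
  have hcast : ((a : ℝ) - ((a - w : ℕ) : ℝ)) = (w : ℝ) := by
    have : ((a - w : ℕ) : ℝ) = (a : ℝ) - w := by
      push_cast [Nat.cast_sub hwa]; ring
    rw [this]; ring
  rw [hcast] at hfin
  have hapos : (0 : ℝ) < a := lt_of_lt_of_le hwpos (by exact_mod_cast hwa)
  have hld : Real.log ((a : ℝ) / w) = Real.log a - Real.log w :=
    Real.log_div (ne_of_gt hapos) (ne_of_gt hwpos)
  rw [← hld] at hfin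
  have h2 : 1 + L * Real.log ((a : ℝ) / w) ≤ L ^ 2 := by
    rw [hL]; nlinarith [hlog0]
  linarith
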